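/- arXiv:2111.07371 — 3 statements merged into one kernel-verified Lean document; each statement's English description precedes it below -/
import Mathlib

section
/- For λ > 0, the function h ↦ (θ(h) - 1)/h, where θ(h) = -log(1-λh)/(λh), is increasing on (0, 1/(2λ)], its limit as h → 0⁺ equals λ/2, and for all h ∈ (0, 1/(2λ)] one has (θ(h)-1)/h ≤ 2λ(2 log 2 - 1). -/
open Real Filter

noncomputable def Gfun (x : ℝ) : ℝ := (-Real.log (1 - x) - x) / x ^ 2

lemma Gfun_hasSum {x : ℝ} (hx0 : 0 < x) (hx1 : x < 1) :
    HasSum (fun n : ℕ => x ^ n / (n + 2)) (Gfun x) := by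
  have habs : |x| < 1 := by rw [abs_of_pos hx0]; exact hx1
  have hxne : x ≠ 0 := ne_of_gt hx0
  have h := Real.hasSum_pow_div_log_of_abs_lt_one habs
  have h2 := (hasSum_nat_add_iff' (f := fun n : ℕ => x ^ (n + 1) / (n + 1)) 1).2 h
  simp only [Finset.range_one, Finset.sum_singleton, Nat.cast_zero, pow_one] at h2
  have h3 := h2.div_const (x ^ 2)
  convert h3 using 1
  · rfl
  · funext n
    have hpos : ((n : ℝ) + 1 + 1) ≠ 0 := by positivity
    push_cast
    field_simp
    ring
  · unfold Gfun
    norm_num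

lemma Gfun_mono {a b : ℝ} (ha : 0 < a) (hab : a ≤ b) (hb : b < 1) :
    Gfun a ≤ Gfun b := by
  have hb0 : 0 < b := lt_of_lt_of_le ha hab
  refine hasSum_le (fun n => ?_) (Gfun_hasSum ha (lt_of_le_of_lt hab hb)) (Gfun_hasSum hb0 hb)
  gcongr

lemma Gfun_lb {x : ℝ} (hx0 : 0 < x) (hx1 : x < 1) : 1 / 2 ≤ Gfun x := by
  have h := Gfun_hasSum hx0 hx1
  have h0 : HasSum (fun n : ℕ => if n = 0 then (1:ℝ)/2 else 0) (1/2) := hasSum_ite_eq 0 _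
  refine hasSum_le (fun n => ?_) h0 h
  rcases n with _ | n
  · simp
  · simp only [if_neg (Nat.succ_ne_zero n)]
    positivity

lemma Gfun_ub {x : ℝ} (hx0 : 0 < x) (hx1 : x ≤ 1/2) : Gfun x ≤ 1 / 2 + 2 * x := by
  have hx1' : x < 1 := lt_of_le_of_lt hx1 (by norm_num)
  have h := Gfun_hasSum hx0 hx1'
  have hg : HasSum (fun n : ℕ => x ^ n) (1 / (1 - x)) := by
    have := hasSum_geometric_of_lt_one hx0.le hx1'
    simpa [one_div] using this
  have hup : HasSum (fun n : ℕ => if n = 0 then (1:ℝ)/2 else x ^ n)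
      (1 / (1 - x) - 1 / 2) := by
    have h0 : HasSum (fun n : ℕ => if n = 0 then (1:ℝ)/2 else 0) (1/2) := hasSum_ite_eq 0 _
    have := hg.sub h0
    convert this using 2 with n
    · rfl
    rcases n with _ | n
    · norm_num
    · simp
  have hle : Gfun x ≤ 1 / (1 - x) - 1 / 2 := by
    refine hasSum_le (fun n => ?_) h hup
    rcases n with _ | n
    · simp
    · simp only [if_neg (Nat.succ_ne_zero n)]
      rw [div_le_iff₀ (by positivity)]
      nlinarith [pow_nonneg hx0.le (n+1)]
  have h14 : 1 / (1 - x) ≤ 1 + 2 * x := by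
    rw [div_le_iff₀ (by linarith)]
    nlinarith
  linarith

theorem stmt_3 (lam : ℝ) (hlam : 0 < lam) :
    MonotoneOn (fun h : ℝ => (-Real.log (1 - lam * h) / (lam * h) - 1) / h)
        (Set.Ioc 0 (1 / (2 * lam))) ∧
      Tendsto (fun h : ℝ => (-Real.log (1 - lam * h) / (lam * h) - 1) / h)
        (nhdsWithin 0 (Set.Ioi 0)) (nhds (lam / 2)) ∧
      ∀ h ∈ Set.Ioc (0 : ℝ) (1 / (2 * lam)),
        (-Real.log (1 - lam * h) / (lam * h) - 1) / h ≤ 2 * lam * (2 * Real.log 2 - 1) := by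
  have key : ∀ h : ℝ, 0 < h →
      (-Real.log (1 - lam * h) / (lam * h) - 1) / h = lam * Gfun (lam * h) := by
    intro h hh
    have h1 : lam * h ≠ 0 := by positivity
    have h2 : h ≠ 0 := ne_of_gt hh
    unfold Gfun
    field_simp
  have hmem : ∀ h ∈ Set.Ioc (0:ℝ) (1 / (2 * lam)), 0 < lam * h ∧ lam * h ≤ 1/2 := by
    intro h hmem
    obtain ⟨h0, h1⟩ := hmem
    refine ⟨by positivity, ?_⟩
    calc lam * h ≤ lam * (1 / (2 * lam)) := mul_le_mul_of_nonneg_left h1 hlam.le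
      _ = 1 / 2 := by field_simp
  have hmono : MonotoneOn (fun h : ℝ => (-Real.log (1 - lam * h) / (lam * h) - 1) / h)
      (Set.Ioc 0 (1 / (2 * lam))) := by
    intro a ha b hb hab
    obtain ⟨ha0, ha1⟩ := hmem a ha
    obtain ⟨hb0, hb1⟩ := hmem b hb
    simp only
    rw [key a ha.1, key b hb.1]
    refine mul_le_mul_of_nonneg_left ?_ hlam.le
    exact Gfun_mono ha0 (mul_le_mul_of_nonneg_left hab hlam.le)
      (lt_of_le_of_lt hb1 (by norm_num))
  refine ⟨hmono, ?_, ?_⟩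
  · have hub : ∀ᶠ h in nhdsWithin (0:ℝ) (Set.Ioi 0),
        (-Real.log (1 - lam * h) / (lam * h) - 1) / h ≤ lam / 2 + 2 * lam ^ 2 * h := by
      filter_upwards [Ioo_mem_nhdsGT_of_mem (by constructor <;> [rfl; positivity] :
        (0:ℝ) ∈ Set.Ico 0 (1/(2*lam)))] with h hh
      obtain ⟨h0, h1⟩ := hh
      obtain ⟨hx0, hx1⟩ := hmem h ⟨h0, h1.le⟩
      rw [key h h0]
      have := Gfun_ub hx0 hx1
      nlinarith
    have hlb : ∀ᶠ h in nhdsWithin (0:ℝ) (Set.Ioi 0),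
        lam / 2 ≤ (-Real.log (1 - lam * h) / (lam * h) - 1) / h := by
      filter_upwards [Ioo_mem_nhdsGT_of_mem (by constructor <;> [rfl; positivity] :
        (0:ℝ) ∈ Set.Ico 0 (1/(2*lam)))] with h hh
      obtain ⟨h0, h1⟩ := hh
      obtain ⟨hx0, hx1⟩ := hmem h ⟨h0, h1.le⟩
      rw [key h h0]
      have := Gfun_lb hx0 (lt_of_le_of_lt hx1 (by norm_num))
      nlinarith
    have htop : Tendsto (fun h : ℝ => lam / 2 + 2 * lam ^ 2 * h)
        (nhdsWithin (0:ℝ) (Set.Ioi 0)) (nhds (lam / 2)) := by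
      have h1 : Tendsto (fun h : ℝ => lam / 2 + 2 * lam ^ 2 * h) (nhds 0) (nhds (lam/2)) := by
        have := ((continuous_const.add ((continuous_const.mul continuous_id) :
          Continuous fun h : ℝ => 2 * lam ^ 2 * h)) : Continuous
          fun h : ℝ => lam / 2 + 2 * lam ^ 2 * h).tendsto 0
        convert this using 2 <;> simp
      exact h1.mono_left nhdsWithin_le_nhds
    exact tendsto_of_tendsto_of_tendsto_of_le_of_le' tendsto_const_nhds htop hlb hub
  · intro h hh
    have hmax : (1 / (2 * lam)) ∈ Set.Ioc (0:ℝ) (1 / (2 * lam)) := ⟨by positivity, le_rfl⟩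
    have hm := hmono hh hmax hh.2
    have h0 : (0:ℝ) < 1 / (2 * lam) := by positivity
    have hval : lam * (1 / (2 * lam)) = 1 / 2 := by field_simp
    have heq : (-Real.log (1 - lam * (1 / (2 * lam))) / (lam * (1 / (2 * lam))) - 1)
        / (1 / (2 * lam)) = 2 * lam * (2 * Real.log 2 - 1) := by
      rw [key _ h0, hval]
      unfold Gfun
      rw [show (1:ℝ) - 1/2 = 1/2 by norm_num, one_div, Real.log_inv]
      ring
    exact hm.trans_eq heq
end

section
/- Let λ > 0, 0 < h ≤ 1/(2λ), and θ = -log(1-λh)/(λh). For every s ≥ 0, |s - θ⌊s/h⌋h| ≤ (θ-1)s + θh. -/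
open Real

theorem stmt_4 (lam h : ℝ) (hlam : 0 < lam) (hh : 0 < h) (hh2 : h ≤ 1 / (2 * lam))
    (θ : ℝ) (hθ : θ = -Real.log (1 - lam * h) / (lam * h)) :
    ∀ s : ℝ, 0 ≤ s → |s - θ * (⌊s / h⌋₊ * h)| ≤ (θ - 1) * s + θ * h := by
  intro s hs
  have hx : 0 < lam * h := mul_pos hlam hh
  have hx1 : lam * h ≤ 1 / 2 := by
    rw [le_div_iff₀ (by positivity : (0:ℝ) < 2 * lam)] at hh2
    nlinarith
  have h1x : 0 < 1 - lam * h := by linarith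
  have hlog : Real.log (1 - lam * h) ≤ -(lam * h) := by
    have := Real.log_le_sub_one_of_pos h1x
    linarith
  have hθ1 : 1 ≤ θ := by
    rw [hθ, le_div_iff₀ hx]
    linarith
  set f : ℝ := (⌊s / h⌋₊ : ℝ) * h with hf
  have hf0 : 0 ≤ f := mul_nonneg (Nat.cast_nonneg _) hh.le
  have hfs : f ≤ s := by
    have := Nat.floor_le (div_nonneg hs hh.le) (R := ℝ) (a := s / h)
    calc f ≤ (s / h) * h := by
            exact mul_le_mul_of_nonneg_right this hh.le
      _ = s := div_mul_cancel₀ s hh.ne'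
  have hsf : s - f ≤ h := by
    have := (Nat.lt_floor_add_one (R := ℝ) (s / h)).le
    have : s / h * h ≤ ((⌊s / h⌋₊ : ℝ) + 1) * h := mul_le_mul_of_nonneg_right this hh.le
    rw [div_mul_cancel₀ s hh.ne'] at this
    nlinarith
  rw [abs_le]
  constructor
  · nlinarith
  · nlinarith
end

section
/- Let λ > 0, M_g > 0, 0 < h ≤ 1/(2λ), and θ = -log(1-λh)/(λh). Then ∫_0^∞ M_g |e^{-λ s} - e^{-λ θ ⌊s/h⌋ h}| ds ≤ C h for a constant C depending only on M_g and λ. -/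
open Real MeasureTheory

lemma exp_diff_aux (a b c : ℝ) (ha : c ≤ a) (hb : c ≤ b) :
    |Real.exp (-a) - Real.exp (-b)| ≤ Real.exp (-c) * |a - b| := by
  wlog hab : a ≤ b generalizing a b
  · rw [abs_sub_comm, abs_sub_comm a b]; exact this b a hb ha (le_of_not_ge hab)
  have h1 : Real.exp (-b) ≤ Real.exp (-a) := Real.exp_le_exp.2 (by linarith)
  have h2 : Real.exp (-a) ≤ Real.exp (-c) := Real.exp_le_exp.2 (by linarith)
  have h3 : (a - b) + 1 ≤ Real.exp (a - b) := Real.add_one_le_exp _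
  have h4 : Real.exp (-a) * Real.exp (a - b) = Real.exp (-b) := by
    rw [← Real.exp_add]; ring_nf
  have h5 : Real.exp (-a) * ((a - b) + 1) ≤ Real.exp (-b) := by
    rw [← h4]; exact mul_le_mul_of_nonneg_left h3 (Real.exp_pos _).le
  have h6 : Real.exp (-a) * (b - a) ≤ Real.exp (-c) * (b - a) :=
    mul_le_mul_of_nonneg_right h2 (by linarith)
  rw [abs_of_nonneg (by linarith), abs_of_nonpos (by linarith)]
  nlinarith
lemma exp_half_lt_two : Real.exp (1/2 : ℝ) < 2 := by
  have h : Real.exp (1/2 : ℝ) * Real.exp (1/2 : ℝ) = Real.exp 1 := by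
    rw [← Real.exp_add]; norm_num
  nlinarith [Real.exp_one_lt_d9, Real.exp_pos (1/2 : ℝ)]

set_option maxHeartbeats 1000000 in
theorem stmt_5 (lam Mg : ℝ) (hlam : 0 < lam) (hMg : 0 < Mg) :
    ∃ C : ℝ, 0 < C ∧ ∀ h : ℝ, 0 < h → h ≤ 1 / (2 * lam) →
      (∫ s in Set.Ioi (0 : ℝ),
          Mg * |Real.exp (-lam * s) -
            Real.exp (-(lam * (-Real.log (1 - lam * h) / (lam * h)) * (⌊s / h⌋₊ * h)))|) ≤
        C * h := by
  refine ⟨6 * Mg, by positivity, fun h hh hh2 => ?_⟩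
  set u := lam * h with hu
  have hu0 : 0 < u := by positivity
  have hu2 : u ≤ 1 / 2 := by
    rw [hu]
    calc lam * h ≤ lam * (1 / (2 * lam)) := mul_le_mul_of_nonneg_left hh2 hlam.le
      _ = 1 / 2 := by field_simp
  have h1u : 0 < 1 - u := by linarith
  set θ : ℝ := -Real.log (1 - u) / u with hθ
  have hθ1 : 1 ≤ θ := by
    have := Real.log_le_sub_one_of_pos h1u
    rw [hθ, le_div_iff₀ hu0]
    linarith
  have hθ2 : θ ≤ 1 + 2 * u := by
    have h3 : (u + 2 * u ^ 2) + 1 ≤ Real.exp (u + 2 * u ^ 2) := Real.add_one_le_exp _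
    have h4 : Real.exp (-(u + 2 * u ^ 2)) * Real.exp (u + 2 * u ^ 2) = 1 := by
      rw [← Real.exp_add]; simp
    have h5 : Real.exp (-(u + 2 * u ^ 2)) ≤ 1 - u := by
      nlinarith [Real.exp_pos (-(u + 2 * u ^ 2))]
    have h6 : -(u + 2 * u ^ 2) ≤ Real.log (1 - u) :=
      (Real.le_log_iff_exp_le h1u).2 h5
    rw [hθ, div_le_iff₀ hu0]
    nlinarith
  have hint1 : IntegrableOn (fun s : ℝ => Real.exp (-lam * s)) (Set.Ioi 0) := by
    simpa using exp_neg_integrableOn_Ioi 0 hlam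
  have hint2 : IntegrableOn (fun s : ℝ => s * Real.exp (-lam * s)) (Set.Ioi 0) := by
    have := integrableOn_rpow_mul_exp_neg_mul_rpow
      (by norm_num : (-1 : ℝ) < 1) (by norm_num : (0 : ℝ) < 1) hlam
    refine this.congr_fun (fun x hx => ?_) measurableSet_Ioi
    simp only [Real.rpow_one]
  -- pointwise bound on Ioi 0
  have hbound : ∀ s ∈ Set.Ioi (0 : ℝ),
      Mg * |Real.exp (-lam * s) - Real.exp (-(lam * θ * (⌊s / h⌋₊ * h)))| ≤
        2 * Mg * lam * h * Real.exp (-lam * s) +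
          4 * Mg * lam ^ 2 * h * (s * Real.exp (-lam * s)) := by
    intro s hs
    rw [Set.mem_Ioi] at hs
    set n : ℕ := ⌊s / h⌋₊ with hn
    have hnh_le : (n : ℝ) * h ≤ s := by
      have := Nat.floor_le (by positivity : (0 : ℝ) ≤ s / h)
      rw [← hn] at this
      calc (n : ℝ) * h ≤ (s / h) * h := by nlinarith
        _ = s := by field_simp
    have hs_lt : s < ((n : ℝ) + 1) * h := by
      have := Nat.lt_floor_add_one (s / h)
      rw [← hn] at this
      calc s = (s / h) * h := by field_simp
        _ < ((n : ℝ) + 1) * h := by nlinarith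
    have hnh0 : (0 : ℝ) ≤ (n : ℝ) * h := by positivity
    have hc1 : lam * (s - h) ≤ lam * s := by nlinarith
    have p1 : (0:ℝ) ≤ lam * ((n : ℝ) * h) * (θ - 1) :=
      mul_nonneg (mul_nonneg hlam.le hnh0) (by linarith)
    have p2 : lam * (s - h) ≤ lam * ((n : ℝ) * h) := by nlinarith
    have hc2 : lam * (s - h) ≤ lam * θ * ((n : ℝ) * h) := by nlinarith
    have key : |Real.exp (-(lam * s)) - Real.exp (-(lam * θ * ((n : ℝ) * h)))| ≤
        Real.exp (-(lam * (s - h))) * |lam * s - lam * θ * ((n : ℝ) * h)| :=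
      exp_diff_aux _ _ _ hc1 hc2
    have habs : |lam * s - lam * θ * ((n : ℝ) * h)| ≤ lam * h + 2 * lam ^ 2 * h * s := by
      have t1 : |lam * s - lam * ((n : ℝ) * h)| ≤ lam * h := by
        rw [abs_of_nonneg (by nlinarith)]; nlinarith
      have q1 : lam * ((n : ℝ) * h) ≤ lam * s := by nlinarith
      have q3 : θ - 1 ≤ 2 * lam * h := by rw [hu] at hθ2; linarith
      have q4 : lam * ((n : ℝ) * h) * (θ - 1) ≤ lam * s * (2 * lam * h) :=
        mul_le_mul q1 q3 (by linarith) (by positivity)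
      have t2 : |lam * ((n : ℝ) * h) - lam * θ * ((n : ℝ) * h)| ≤ 2 * lam ^ 2 * h * s := by
        rw [abs_of_nonpos (by nlinarith)]
        nlinarith
      calc |lam * s - lam * θ * ((n : ℝ) * h)|
          ≤ |lam * s - lam * ((n : ℝ) * h)| +
            |lam * ((n : ℝ) * h) - lam * θ * ((n : ℝ) * h)| :=
            abs_sub_le _ _ _
        _ ≤ lam * h + 2 * lam ^ 2 * h * s := add_le_add t1 t2
    have hexp2 : Real.exp (-(lam * (s - h))) ≤ 2 * Real.exp (-lam * s) := by
      have he : Real.exp (-(lam * (s - h))) = Real.exp (lam * h) * Real.exp (-lam * s) := by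
        rw [← Real.exp_add]; ring_nf
      rw [he]
      have hlh : Real.exp (lam * h) ≤ Real.exp (1/2 : ℝ) :=
        Real.exp_le_exp.2 (by rw [← hu]; linarith)
      nlinarith [Real.exp_pos (-lam * s), exp_half_lt_two]
    have key2 : |Real.exp (-(lam * s)) - Real.exp (-(lam * θ * ((n : ℝ) * h)))| ≤
        2 * Real.exp (-lam * s) * (lam * h + 2 * lam ^ 2 * h * s) := by
      refine key.trans ?_
      refine mul_le_mul hexp2 habs (abs_nonneg _) ?_
      positivity
    have hrw : Real.exp (-lam * s) - Real.exp (-(lam * θ * ((n : ℝ) * h)))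
        = Real.exp (-(lam * s)) - Real.exp (-(lam * θ * ((n : ℝ) * h))) := by ring_nf
    rw [hrw]
    calc Mg * |Real.exp (-(lam * s)) - Real.exp (-(lam * θ * ((n : ℝ) * h)))|
        ≤ Mg * (2 * Real.exp (-lam * s) * (lam * h + 2 * lam ^ 2 * h * s)) :=
          mul_le_mul_of_nonneg_left key2 hMg.le
      _ = 2 * Mg * lam * h * Real.exp (-lam * s) +
          4 * Mg * lam ^ 2 * h * (s * Real.exp (-lam * s)) := by ring
  have hmono : (∫ s in Set.Ioi (0 : ℝ),
      Mg * |Real.exp (-lam * s) - Real.exp (-(lam * θ * (⌊s / h⌋₊ * h)))|) ≤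
      ∫ s in Set.Ioi (0 : ℝ),
        (2 * Mg * lam * h * Real.exp (-lam * s) +
          4 * Mg * lam ^ 2 * h * (s * Real.exp (-lam * s))) := by
    apply integral_mono_of_nonneg
    · filter_upwards with s; positivity
    · exact (hint1.const_mul _).add (hint2.const_mul _)
    · exact (ae_restrict_iff' measurableSet_Ioi).2
        (Filter.Eventually.of_forall hbound)
  refine hmono.trans ?_
  have hI1 : (∫ s in Set.Ioi (0 : ℝ), Real.exp (-lam * s)) = 1 / lam := by
    have hG := Real.integral_rpow_mul_exp_neg_mul_Ioi (by norm_num : (0:ℝ) < 1) hlam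
    rw [Real.rpow_one, Real.Gamma_one, mul_one] at hG
    rw [← hG]
    refine setIntegral_congr_fun measurableSet_Ioi (fun x hx => ?_)
    rw [show (1:ℝ) - 1 = 0 by norm_num, Real.rpow_zero, one_mul, neg_mul]
  have hI2 : (∫ s in Set.Ioi (0 : ℝ), s * Real.exp (-lam * s)) = 1 / lam ^ 2 := by
    have hG := Real.integral_rpow_mul_exp_neg_mul_Ioi (by norm_num : (0:ℝ) < 2) hlam
    have h2 : ((1:ℝ) / lam) ^ (2:ℝ) * Real.Gamma 2 = 1 / lam ^ 2 := by
      rw [Real.Gamma_two, mul_one,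
        show (2:ℝ) = ((2:ℕ):ℝ) by norm_num, Real.rpow_natCast, div_pow, one_pow]
    rw [h2] at hG
    rw [← hG]
    refine setIntegral_congr_fun measurableSet_Ioi (fun x hx => ?_)
    rw [show (2:ℝ) - 1 = 1 by norm_num, Real.rpow_one, neg_mul]
  have hcalc : (∫ s in Set.Ioi (0 : ℝ),
      (2 * Mg * lam * h * Real.exp (-lam * s) +
        4 * Mg * lam ^ 2 * h * (s * Real.exp (-lam * s)))) = 6 * Mg * h := by
    rw [integral_add (hint1.const_mul _) (hint2.const_mul _),
      integral_const_mul, integral_const_mul, hI1, hI2]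
    field_simp
    ring
  rw [hcalc]
end
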